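/- Let α be a finite type, let f₀, f₁, …, f_{k−1} : α → α, and let f = f_{k−1} ∘ f_{k−2} ∘ ⋯ ∘ f₀. If r(f) = 1, then for every i, r(f_i) = 0 or r(f_i) = 1; that is, each f_i is either a bijection or a quasi-bijection. -/

import Mathlib

/-- The ramification degree of `f : α → α`:
`r(f) = ∑_{y} max(0, |f⁻¹({y})| − 1)` (natural subtraction truncates at 0). -/
def ramDeg {α : Type*} [Fintype α] [DecidableEq α] (f : α → α) : ℕ :=
  ∑ y : α, ((Finset.univ.filter (fun x => f x = y)).card - 1)

/-- The composition `f_{k-1} ∘ f_{k-2} ∘ ⋯ ∘ f₀` of a finite family of self-maps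
(`f 0` is applied first). -/
def compFamily {α : Type*} {k : ℕ} (f : Fin k → α → α) : α → α :=
  (List.ofFn f).foldl (fun acc g => g ∘ acc) id

lemma ramDeg_eq_card_sub {α : Type*} [Fintype α] [DecidableEq α] (f : α → α) :
    ramDeg f = Fintype.card α - (Finset.univ.image f).card := by
  classical
  unfold ramDeg
  have hsplit := Finset.sum_filter_add_sum_filter_not Finset.univ
    (fun y => y ∈ Finset.univ.image f)
    (fun y => (Finset.univ.filter (fun x => f x = y)).card - 1)
  have hfilter : Finset.univ.filter (fun y => y ∈ Finset.univ.image f)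
      = Finset.univ.image f := by
    ext y; simp
  have hzero : ∑ y ∈ Finset.univ.filter (fun y => ¬ y ∈ Finset.univ.image f),
      ((Finset.univ.filter (fun x => f x = y)).card - 1) = 0 := by
    apply Finset.sum_eq_zero
    intro y hy
    simp only [Finset.mem_filter, Finset.mem_image] at hy
    have : Finset.univ.filter (fun x => f x = y) = ∅ := by
      ext x; simp only [Finset.mem_filter, Finset.mem_univ, true_and, Finset.notMem_empty,
        iff_false]
      intro h; exact hy.2 ⟨x, by simp [h]⟩
    simp [this]
  rw [← hsplit, hzero, add_zero, hfilter]
  have hone : ∀ y ∈ Finset.univ.image f,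
      1 ≤ (Finset.univ.filter (fun x => f x = y)).card := by
    intro y hy
    rw [Finset.mem_image] at hy
    obtain ⟨x, -, hx⟩ := hy
    exact Finset.card_pos.mpr ⟨x, by simp [hx]⟩
  rw [Finset.sum_tsub_distrib _ (fun y hy => hone y hy)]
  have hsum : ∑ y ∈ Finset.univ.image f, (Finset.univ.filter (fun x => f x = y)).card
      = Fintype.card α := by
    rw [← Finset.card_eq_sum_card_fiberwise (fun x _ => Finset.mem_image_of_mem f
      (Finset.mem_univ x))]
    exact Finset.card_univ
  rw [hsum, Finset.sum_const, smul_eq_mul, mul_one]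

lemma foldl_image_card_le {α : Type*} [Fintype α] [DecidableEq α]
    (L : List (α → α)) (h : α → α) :
    (Finset.univ.image (L.foldl (fun acc g => g ∘ acc) h)).card
      ≤ (Finset.univ.image h).card := by
  induction L generalizing h with
  | nil => simp
  | cons a L ih =>
      refine le_trans (ih (a ∘ h)) ?_
      have : Finset.univ.image (a ∘ h) = (Finset.univ.image h).image a := by
        rw [Finset.image_image]
      rw [this]
      exact le_trans (Finset.card_image_le) le_rfl

lemma foldl_image_card_le_mem {α : Type*} [Fintype α] [DecidableEq α]
    (L : List (α → α)) (h g : α → α) (hg : g ∈ L) :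
    (Finset.univ.image (L.foldl (fun acc g => g ∘ acc) h)).card
      ≤ (Finset.univ.image g).card := by
  induction L generalizing h with
  | nil => simp at hg
  | cons a L ih =>
      rcases List.mem_cons.mp hg with rfl | hg'
      · refine le_trans (foldl_image_card_le L (g ∘ h)) ?_
        have : Finset.univ.image (g ∘ h) = (Finset.univ.image h).image g := by
          rw [Finset.image_image]
        rw [this]
        apply Finset.card_le_card
        apply Finset.image_subset_image
        exact Finset.subset_univ _
      · exact ih (a ∘ h) hg'

theorem ramDeg_components_of_comp_eq_one {α : Type*} [Fintype α] [DecidableEq α]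
    {k : ℕ} (f : Fin k → α → α) (hf : ramDeg (compFamily f) = 1) :
    ∀ i : Fin k, ramDeg (f i) = 0 ∨ ramDeg (f i) = 1 := by
  intro i
  have hmem : f i ∈ List.ofFn f := List.mem_ofFn.mpr ⟨i, rfl⟩
  have hcard := foldl_image_card_le_mem (List.ofFn f) id (f i) hmem
  have hle : ramDeg (f i) ≤ ramDeg (compFamily f) := by
    rw [ramDeg_eq_card_sub, ramDeg_eq_card_sub, compFamily]
    exact Nat.sub_le_sub_left hcard _
  rw [hf] at hle
  exact Nat.le_one_iff_eq_zero_or_eq_one.mp hle
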